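/- Let n be a natural number and let α : (Fin n → ℝ) → Matrix (Fin n) (Fin n) ℝ be differentiable with α^{jk}(x) = −α^{kj}(x) for all x, j, k, satisfying the Jacobi identity: for all x and all j, k, m: Σ_i (∂_i α^{jk}(x))·α^{im}(x) + Σ_i (∂_i α^{km}(x))·α^{ij}(x) + Σ_i (∂_i α^{mj}(x))·α^{ik}(x) = 0, where ∂_i is the partial derivative in the i-th coordinate. Then for every x ∈ (Fin n → ℝ), every k, and all ε, ε' ∈ (Fin n → ℝ): Σ_{m,s,j} α^{ms}(x)·(∂_m α^{kj}(x))·(ε'_s·ε_j − ε_s·ε'_j) = Σ_{i,j,l} α^{ki}(x)·(∂_i α^{jl}(x))·ε_j·ε'_l. -/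

import Mathlib

private lemma rot3 {n : ℕ} (f : Fin n → Fin n → Fin n → ℝ) :
    ∑ i, ∑ j, ∑ l, f i j l = ∑ j, ∑ l, ∑ i, f i j l := by
  rw [Finset.sum_comm]
  exact Finset.sum_congr rfl fun _ _ => Finset.sum_comm

theorem poisson_sigma_gauge_closure
    (n : ℕ) (α : (Fin n → ℝ) → Matrix (Fin n) (Fin n) ℝ)
    (hdiff : ∀ j k, Differentiable ℝ (fun x => α x j k))
    (hanti : ∀ (x : Fin n → ℝ) (j k : Fin n), α x j k = -α x k j)
    (hJacobi : ∀ (x : Fin n → ℝ) (j k m : Fin n),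
      (∑ i, fderiv ℝ (fun y => α y j k) x (Pi.single i 1) * α x i m)
      + (∑ i, fderiv ℝ (fun y => α y k m) x (Pi.single i 1) * α x i j)
      + (∑ i, fderiv ℝ (fun y => α y m j) x (Pi.single i 1) * α x i k) = 0) :
    ∀ (x : Fin n → ℝ) (k : Fin n) (ε ε' : Fin n → ℝ),
      (∑ m, ∑ s, ∑ j, α x m s * fderiv ℝ (fun y => α y k j) x (Pi.single m 1)
        * (ε' s * ε j - ε s * ε' j))
      = ∑ i, ∑ j, ∑ l, α x k i * fderiv ℝ (fun y => α y j l) x (Pi.single i 1)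
        * ε j * ε' l := by
  intro x k ε ε'
  set a : Matrix (Fin n) (Fin n) ℝ := α x with ha
  set d : Fin n → Fin n → Fin n → ℝ :=
    fun i j l => fderiv ℝ (fun y => α y j l) x (Pi.single i 1) with hdd
  -- antisymmetry of d in its last two slots
  have hd : ∀ i j l, d i l j = - d i j l := by
    intro i j l
    have hfun : (fun y => α y l j) = (fun y => -(α y j l)) := by
      funext y; rw [hanti y l j]
    simp only [hdd, hfun]
    rw [fderiv_fun_neg]
    simp
  have ha' : ∀ i j, a j i = - a i j := fun i j => hanti x j i
  -- key contraction of the Jacobi identity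
  have key : ∀ j l, (∑ i, a k i * d i j l)
      = ∑ i, (a i j * d i l k + a i l * d i k j) := by
    intro j l
    have hJ : (∑ i, d i j l * a i k) + (∑ i, d i l k * a i j)
        + (∑ i, d i k j * a i l) = 0 := hJacobi x j l k
    have e1 : (∑ i, a k i * d i j l) = - ∑ i, d i j l * a i k := by
      rw [← Finset.sum_neg_distrib]
      exact Finset.sum_congr rfl fun i _ => by rw [ha' i k]; ring
    have e2 : (∑ i, (a i j * d i l k + a i l * d i k j))
        = (∑ i, d i l k * a i j) + (∑ i, d i k j * a i l) := by
      rw [Finset.sum_add_distrib]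
      congr 1 <;> exact Finset.sum_congr rfl fun i _ => mul_comm _ _
    rw [e1, e2]; linarith
  -- rewrite the RHS using `key`
  have hR : (∑ i, ∑ j, ∑ l, a k i * d i j l * ε j * ε' l)
      = ∑ i, ∑ j, ∑ l, (a i j * d i l k + a i l * d i k j) * ε j * ε' l := by
    rw [rot3, rot3 (fun i j l => (a i j * d i l k + a i l * d i k j) * ε j * ε' l)]
    refine Finset.sum_congr rfl fun j _ => Finset.sum_congr rfl fun l _ => ?_
    rw [← Finset.sum_mul, ← Finset.sum_mul, ← Finset.sum_mul, ← Finset.sum_mul,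
      key j l]
  rw [hR]
  -- now compare termwise after splitting and index renaming
  have hsplit : (∑ m, ∑ s, ∑ j, a m s * d m k j * (ε' s * ε j - ε s * ε' j))
      = (∑ m, ∑ s, ∑ j, a m s * d m k j * ε' s * ε j)
        - (∑ m, ∑ s, ∑ j, a m s * d m k j * ε s * ε' j) := by
    rw [← Finset.sum_sub_distrib]
    refine Finset.sum_congr rfl fun m _ => ?_
    rw [← Finset.sum_sub_distrib]
    refine Finset.sum_congr rfl fun s _ => ?_
    rw [← Finset.sum_sub_distrib]
    exact Finset.sum_congr rfl fun j _ => by ring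
  have hRsplit : (∑ i, ∑ j, ∑ l, (a i j * d i l k + a i l * d i k j) * ε j * ε' l)
      = (∑ i, ∑ j, ∑ l, a i j * d i l k * ε j * ε' l)
        + (∑ i, ∑ j, ∑ l, a i l * d i k j * ε j * ε' l) := by
    rw [← Finset.sum_add_distrib]
    refine Finset.sum_congr rfl fun i _ => ?_
    rw [← Finset.sum_add_distrib]
    refine Finset.sum_congr rfl fun j _ => ?_
    rw [← Finset.sum_add_distrib]
    exact Finset.sum_congr rfl fun l _ => by ring
  rw [hsplit, hRsplit]
  have h1 : (∑ m, ∑ s, ∑ j, a m s * d m k j * ε' s * ε j)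
      = ∑ i, ∑ j, ∑ l, a i l * d i k j * ε j * ε' l := by
    refine Finset.sum_congr rfl fun i _ => ?_
    rw [Finset.sum_comm]
    exact Finset.sum_congr rfl fun j _ => Finset.sum_congr rfl fun l _ => by ring
  have h2 : (∑ m, ∑ s, ∑ j, a m s * d m k j * ε s * ε' j)
      = - ∑ i, ∑ j, ∑ l, a i j * d i l k * ε j * ε' l := by
    rw [← Finset.sum_neg_distrib]
    refine Finset.sum_congr rfl fun i _ => ?_
    rw [← Finset.sum_neg_distrib]
    refine Finset.sum_congr rfl fun j _ => ?_
    rw [← Finset.sum_neg_distrib]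
    refine Finset.sum_congr rfl fun l _ => ?_
    rw [hd i l k]; ring
  rw [h1, h2]; ring
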